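/- Assuming that for every k ≥ 2 every graph on n vertices with at least (k−1)n + 1 edges contains a non-empty subgraph all of whose degrees are divisible by k, it follows that χ'_k(G) ≤ 14k − 9 for every graph G. -/

import Mathlib

/-- The number of edges of `G` incident to `v` that receive color `i` under `c`. -/
def colorDeg {V : Type*} [Fintype V] [DecidableEq V] (G : SimpleGraph V)
    [DecidableRel G.Adj] {m : ℕ} (c : Sym2 V → Fin m) (i : Fin m) (v : V) : ℕ :=
  ((G.incidenceFinset v).filter (fun e => c e = i)).card

/-- `c` is a χ'_k-coloring: each color class spans a subgraph with all degrees ≡ 1 (mod k). -/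
def IsChiPrimeKColoring {V : Type*} [Fintype V] [DecidableEq V] (G : SimpleGraph V)
    [DecidableRel G.Adj] (k : ℕ) {m : ℕ} (c : Sym2 V → Fin m) : Prop :=
  ∀ i : Fin m, ∀ v : V, colorDeg G c i v = 0 ∨ colorDeg G c i v % k = 1


set_option linter.unusedSectionVars false
namespace ChiAux
open Finset

/-- Greedy distinct-representative selection by descending `uR`. -/
lemma phase2 {ι : Type} [DecidableEq ι] :
    ∀ (n : ℕ) (I : Finset ι), I.card = n →
    ∀ (uR : ι → ℕ) (avail : ι → Finset ℕ) (used : Finset ℕ),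
    (∀ e ∈ I, (I.filter (fun e' => uR e ≤ uR e')).card + used.card ≤ (avail e).card) →
    ∃ γ : ι → ℕ, (∀ e ∈ I, γ e ∈ avail e ∧ γ e ∉ used) ∧
      (∀ c : ℕ, (I.filter (fun e => γ e = c)).card ≤ 1) := by
  intro n
  induction n with
  | zero =>
    intro I hI uR avail used _
    rw [Finset.card_eq_zero] at hI; subst hI
    exact ⟨fun _ => 0, by simp, by simp⟩
  | succ m ih =>
    intro I hI uR avail used hA
    have hne : I.Nonempty := by rw [← Finset.card_pos, hI]; omega
    obtain ⟨e0, he0, hmax⟩ := I.exists_max_image uR hne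
    have h1 : 1 ≤ (I.filter (fun e' => uR e0 ≤ uR e')).card := by
      refine Finset.card_pos.2 ⟨e0, ?_⟩
      simp [he0]
    have hA0 := hA e0 he0
    have hav : ((avail e0) \ used).Nonempty := by
      rw [← Finset.card_pos]
      have h2 := Finset.le_card_sdiff used (avail e0)
      omega
    obtain ⟨c0, hc0⟩ := hav
    rw [Finset.mem_sdiff] at hc0
    have hcard' : (I.erase e0).card = m := by
      rw [Finset.card_erase_of_mem he0, hI]
      omega
    have hA' : ∀ e ∈ I.erase e0,
        ((I.erase e0).filter (fun e' => uR e ≤ uR e')).card + (insert c0 used).card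
          ≤ (avail e).card := by
      intro e he
      have heI : e ∈ I := Finset.mem_of_mem_erase he
      have hfe : (I.erase e0).filter (fun e' => uR e ≤ uR e')
          = ((I.filter (fun e' => uR e ≤ uR e')).erase e0) := by
        rw [Finset.filter_erase]
      have he0f : e0 ∈ I.filter (fun e' => uR e ≤ uR e') := by
        simp only [Finset.mem_filter]
        exact ⟨he0, hmax e heI⟩
      have hcc : ((I.erase e0).filter (fun e' => uR e ≤ uR e')).card
          = (I.filter (fun e' => uR e ≤ uR e')).card - 1 := by
        rw [hfe, Finset.card_erase_of_mem he0f]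
      have hpos : 1 ≤ (I.filter (fun e' => uR e ≤ uR e')).card :=
        Finset.card_pos.2 ⟨e0, he0f⟩
      have hins : (insert c0 used).card ≤ used.card + 1 := Finset.card_insert_le _ _
      have := hA e heI
      omega
    obtain ⟨γ', hγ'1, hγ'2⟩ := ih (I.erase e0) hcard' uR avail (insert c0 used) hA'
    refine ⟨Function.update γ' e0 c0, ?_, ?_⟩
    · intro e he
      by_cases heq : e = e0
      · subst heq
        simp only [Function.update_self]
        exact ⟨hc0.1, hc0.2⟩
      · rw [Function.update_of_ne heq]
        have := hγ'1 e (Finset.mem_erase.2 ⟨heq, he⟩)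
        exact ⟨this.1, fun hu => this.2 (Finset.mem_insert_of_mem hu)⟩
    · intro c
      by_cases hcc0 : c = c0
      · rw [hcc0]
        have : I.filter (fun e => Function.update γ' e0 c0 e = c0) ⊆ {e0} := by
          intro e he
          rw [Finset.mem_filter] at he
          by_contra hne'
          simp only [Finset.mem_singleton] at hne'
          rw [Function.update_of_ne hne'] at he
          have := hγ'1 e (Finset.mem_erase.2 ⟨hne', he.1⟩)
          exact this.2 (he.2 ▸ Finset.mem_insert_self c0 used)
        calc (I.filter (fun e => Function.update γ' e0 c0 e = c0)).card
            ≤ ({e0} : Finset ι).card := Finset.card_le_card this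
          _ = 1 := Finset.card_singleton e0
      · have heq : I.filter (fun e => Function.update γ' e0 c0 e = c)
            = (I.erase e0).filter (fun e => γ' e = c) := by
          ext e
          simp only [Finset.mem_filter, Finset.mem_erase]
          constructor
          · rintro ⟨heI, hec⟩
            by_cases he0' : e = e0
            · subst he0'; rw [Function.update_self] at hec; exact absurd hec.symm hcc0
            · rw [Function.update_of_ne he0'] at hec; exact ⟨⟨he0', heI⟩, hec⟩
          · rintro ⟨⟨hne', heI⟩, hec⟩
            rw [Function.update_of_ne hne']
            exact ⟨heI, hec⟩
        rw [heq]
        exact hγ'2 c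


/-- Two-phase allocation: items with small forbidden sets can be assigned colors from
`pool ∪ reserve` so that pool color classes have size ≡ 1 (mod k) and reserve colors
are used at most once. -/
lemma allocAux {ι : Type} [DecidableEq ι] (k p : ℕ) (hk : 2 ≤ k)
    (pool reserve : Finset ℕ) (hdisj : Disjoint pool reserve)
    (hpc : pool.card = p) (hrc : reserve.card = p) (forb : ι → Finset ℕ) :
    ∀ (n : ℕ) (I : Finset ι), I.card = n → ∀ (P : Finset ℕ), P ⊆ pool →
    (∀ e ∈ I, (forb e).card + k ≤ p) →
    (∀ c ∈ pool, c ∉ P → (I.filter (fun e => c ∉ forb e)).card + 1 ≤ k) →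
    ∃ γ : ι → ℕ,
      (∀ e ∈ I, γ e ∈ P ∪ reserve ∧ γ e ∉ forb e) ∧
      (∀ c ∈ pool, (I.filter (fun e => γ e = c)).card % k = 1 ∨
        (I.filter (fun e => γ e = c)).card = 0) ∧
      (∀ c ∈ reserve, (I.filter (fun e => γ e = c)).card ≤ 1) := by
  intro n
  induction n using Nat.strong_induction_on with
  | _ n ih =>
  intro I hIn P hP hforb hout
  by_cases hpop : ∃ c ∈ P, k + 1 ≤ (I.filter (fun e => c ∉ forb e)).card
  · -- phase 1 step: extract a large class on a popular pool color
    obtain ⟨c0, hc0P, hc0⟩ := hpop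
    set T := I.filter (fun e => c0 ∉ forb e) with hT
    set t := T.card with ht
    have htk : k + 1 ≤ t := hc0
    -- σ = k*q + 1 where q = (t-1)/k
    set q := (t - 1) / k with hqdef
    set r := (t - 1) % k with hrdef
    have hdm : k * q + r = t - 1 := Nat.div_add_mod (t - 1) k
    have hrk : r < k := Nat.mod_lt _ (by omega)
    set K := k * q with hK
    have hσle : K + 1 ≤ t := by omega
    obtain ⟨T₀, hT₀sub, hT₀card⟩ := T.exists_subset_card_eq hσle
    have hT₀I : T₀ ⊆ I := hT₀sub.trans (Finset.filter_subset _ _)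
    have hT₀forb : ∀ e ∈ T₀, c0 ∉ forb e := by
      intro e he
      have := hT₀sub he
      rw [hT, Finset.mem_filter] at this
      exact this.2
    set I' := I \ T₀ with hI'
    have hI'card : I'.card = n - (K + 1) := by
      rw [hI', Finset.card_sdiff_of_subset hT₀I, hT₀card, hIn]
    have hlt : I'.card < n := by
      have : 1 ≤ K + 1 := by omega
      have hn : K + 1 ≤ n := by
        rw [← hIn]
        exact le_trans hσle (le_trans (Finset.card_le_card (Finset.filter_subset _ _)) le_rfl)
      omega
    have hrec := ih I'.card hlt I' rfl (P.erase c0) ((Finset.erase_subset _ _).trans hP)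
      (fun e he => hforb e (Finset.mem_sdiff.1 he).1)
      ?_
    swap
    · -- new smallness condition
      intro c hcpool hcP'
      by_cases hcc0 : c = c0
      · subst hcc0
        have heq : I'.filter (fun e => c ∉ forb e) = T \ T₀ := by
          ext e
          simp only [hI', hT, Finset.mem_sdiff, Finset.mem_filter]
          tauto
        rw [heq, Finset.card_sdiff_of_subset hT₀sub, hT₀card]
        omega
      · have hcP : c ∉ P := by
          intro hc
          exact hcP' (Finset.mem_erase.2 ⟨hcc0, hc⟩)
        have hsub : I'.filter (fun e => c ∉ forb e) ⊆ I.filter (fun e => c ∉ forb e) :=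
          Finset.filter_subset_filter _ (Finset.sdiff_subset)
        have := hout c hcpool hcP
        have := Finset.card_le_card hsub
        omega
    obtain ⟨γ', hγ'r, hγ'pool, hγ'res⟩ := hrec
    refine ⟨fun e => if e ∈ T₀ then c0 else γ' e, ?_, ?_, ?_⟩
    · intro e he
      by_cases heT : e ∈ T₀
      · simp only [if_pos heT]
        exact ⟨Finset.mem_union_left _ hc0P, hT₀forb e heT⟩
      · simp only [if_neg heT]
        have heI' : e ∈ I' := Finset.mem_sdiff.2 ⟨he, heT⟩
        have := hγ'r e heI'
        refine ⟨?_, this.2⟩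
        rcases Finset.mem_union.1 this.1 with h | h
        · exact Finset.mem_union_left _ (Finset.mem_of_mem_erase h)
        · exact Finset.mem_union_right _ h
    · intro c hcpool
      by_cases hcc0 : c = c0
      · rw [hcc0]
        have heq : I.filter (fun e => (if e ∈ T₀ then c0 else γ' e) = c0) = T₀ := by
          ext e
          simp only [Finset.mem_filter]
          constructor
          · rintro ⟨heI, hec⟩
            by_cases heT : e ∈ T₀
            · exact heT
            · exfalso
              rw [if_neg heT] at hec
              have heI' : e ∈ I' := Finset.mem_sdiff.2 ⟨heI, heT⟩
              have hr := (hγ'r e heI').1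
              rcases Finset.mem_union.1 hr with h | h
              · rw [hec] at h
                exact Finset.notMem_erase c0 P h
              · rw [hec] at h
                exact (Finset.disjoint_left.1 hdisj (hP hc0P)) h
          · intro heT
            exact ⟨hT₀I heT, if_pos heT⟩
        rw [heq, hT₀card]
        left
        have h1k : 1 % k = 1 := Nat.mod_eq_of_lt (by omega)
        rw [hK, Nat.mul_add_mod, h1k]
      · have heq : I.filter (fun e => (if e ∈ T₀ then c0 else γ' e) = c)
            = I'.filter (fun e => γ' e = c) := by
          ext e
          simp only [Finset.mem_filter, hI', Finset.mem_sdiff]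
          constructor
          · rintro ⟨heI, hec⟩
            by_cases heT : e ∈ T₀
            · rw [if_pos heT] at hec; exact absurd hec.symm hcc0
            · rw [if_neg heT] at hec; exact ⟨⟨heI, heT⟩, hec⟩
          · rintro ⟨⟨heI, heT⟩, hec⟩
            rw [if_neg heT]
            exact ⟨heI, hec⟩
        rw [heq]
        exact hγ'pool c hcpool
    · intro c hcres
      have hcc0 : c ≠ c0 := by
        intro h
        exact (Finset.disjoint_left.1 hdisj (hP hc0P)) (h ▸ hcres)
      have heq : I.filter (fun e => (if e ∈ T₀ then c0 else γ' e) = c)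
          = I'.filter (fun e => γ' e = c) := by
        ext e
        simp only [Finset.mem_filter, hI', Finset.mem_sdiff]
        constructor
        · rintro ⟨heI, hec⟩
          by_cases heT : e ∈ T₀
          · rw [if_pos heT] at hec; exact absurd hec.symm hcc0
          · rw [if_neg heT] at hec; exact ⟨⟨heI, heT⟩, hec⟩
        · rintro ⟨⟨heI, heT⟩, hec⟩
          rw [if_neg heT]
          exact ⟨heI, hec⟩
      rw [heq]
      exact hγ'res c hcres
  · -- phase 2: all pool colors unpopular, use reserve singletons
    push_neg at hpop
    have hall : ∀ c ∈ pool, (I.filter (fun e => c ∉ forb e)).card ≤ k := by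
      intro c hc
      by_cases hcP : c ∈ P
      · have := hpop c hcP; omega
      · have := hout c hc hcP; omega
    have hsum : ∑ c ∈ pool, (I.filter (fun e => c ∉ forb e)).card ≤ k * p := by
      calc ∑ c ∈ pool, (I.filter (fun e => c ∉ forb e)).card
          ≤ pool.card • k := Finset.sum_le_card_nsmul _ _ _ hall
        _ = k * p := by rw [hpc, smul_eq_mul, Nat.mul_comm]
    have hswap : ∑ e ∈ I, (pool \ forb e).card
        = ∑ c ∈ pool, (I.filter (fun e => c ∉ forb e)).card := by
      have h1 : ∀ e, (pool \ forb e).card = ∑ c ∈ pool, if c ∉ forb e then 1 else 0 := by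
        intro e
        rw [Finset.sdiff_eq_filter, Finset.card_filter]
      have h2 : ∀ c, (I.filter (fun e => c ∉ forb e)).card
          = ∑ e ∈ I, if c ∉ forb e then 1 else 0 := by
        intro c
        rw [Finset.card_filter]
      rw [Finset.sum_congr rfl (fun e _ => h1 e), Finset.sum_comm,
        Finset.sum_congr rfl (fun c _ => (h2 c).symm)]
    have hpavail : ∀ e ∈ I, k + (reserve ∩ forb e).card ≤ (pool \ forb e).card := by
      intro e he
      have h1 := Finset.card_sdiff_add_card_inter pool (forb e)
      have h2 : (pool ∩ forb e).card + (reserve ∩ forb e).card ≤ (forb e).card := by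
        have hd : Disjoint (pool ∩ forb e) (reserve ∩ forb e) :=
          hdisj.mono Finset.inter_subset_left Finset.inter_subset_left
        rw [← Finset.card_union_of_disjoint hd]
        exact Finset.card_le_card
          (Finset.union_subset Finset.inter_subset_right Finset.inter_subset_right)
      have h3 := hforb e he
      omega
    have hcnt : ∀ e ∈ I,
        (I.filter (fun e' => (reserve ∩ forb e).card ≤ (reserve ∩ forb e').card)).card
          + (∅ : Finset ℕ).card ≤ (reserve \ forb e).card := by
      intro e he
      set x := (reserve ∩ forb e).card with hx
      set N := (I.filter (fun e' => x ≤ (reserve ∩ forb e').card)).card with hN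
      have hsub : I.filter (fun e' => x ≤ (reserve ∩ forb e').card) ⊆ I :=
        Finset.filter_subset _ _
      have hN1 : N * (k + x) ≤ ∑ e' ∈ I.filter (fun e' => x ≤ (reserve ∩ forb e').card),
          (pool \ forb e').card := by
        rw [hN]
        calc (I.filter (fun e' => x ≤ (reserve ∩ forb e').card)).card * (k + x)
            = ∑ _e' ∈ I.filter (fun e' => x ≤ (reserve ∩ forb e').card), (k + x) := by
              rw [Finset.sum_const, smul_eq_mul]
          _ ≤ _ := by
              refine Finset.sum_le_sum ?_
              intro e' he'
              rw [Finset.mem_filter] at he'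
              have := hpavail e' he'.1
              omega
      have hN2 : ∑ e' ∈ I.filter (fun e' => x ≤ (reserve ∩ forb e').card),
          (pool \ forb e').card ≤ ∑ e' ∈ I, (pool \ forb e').card :=
        Finset.sum_le_sum_of_subset hsub
      have hN3 : N * (k + x) ≤ k * p := by
        calc N * (k + x) ≤ ∑ e' ∈ I, (pool \ forb e').card := le_trans hN1 hN2
          _ = _ := hswap
          _ ≤ k * p := hsum
      have hxk : x + k ≤ p := by
        have h1 : x ≤ (forb e).card :=
          hx ▸ Finset.card_le_card Finset.inter_subset_right
        have h2 := hforb e he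
        omega
      have hgoal : N + x ≤ p := by
        by_contra hcon
        push_neg at hcon
        set y := p + 1 - x with hy
        have hyx : y + x = p + 1 := by omega
        have hyk : k + 1 ≤ y := by omega
        have hNy : y ≤ N := by omega
        have hmul1 : y * (k + x) ≤ N * (k + x) := Nat.mul_le_mul_right _ hNy
        have hmul2 : y * (k + x) ≤ k * p := le_trans hmul1 hN3
        have e1 : y * (k + x) = y * k + y * x := Nat.mul_add y k x
        have e3 : k * y + k * x = k * p + k := by
          rw [← Nat.mul_add, hyx, Nat.mul_add, Nat.mul_one]
        have e4 : (k + 1) * x ≤ y * x := Nat.mul_le_mul_right _ hyk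
        have e5 : (k + 1) * x = k * x + x := by ring
        have e6 : y * k = k * y := Nat.mul_comm _ _
        omega
      have hres : (reserve \ forb e).card + x = p := by
        rw [hx, ← hrc]
        exact Finset.card_sdiff_add_card_inter reserve (forb e)
      simp only [Finset.card_empty, Nat.add_zero]
      omega
    obtain ⟨γ, hγ1, hγ2⟩ := phase2 I.card I rfl (fun e => (reserve ∩ forb e).card)
      (fun e => reserve \ forb e) ∅ hcnt
    refine ⟨γ, ?_, ?_, ?_⟩
    · intro e he
      have := (hγ1 e he).1
      rw [Finset.mem_sdiff] at this
      exact ⟨Finset.mem_union_right _ this.1, this.2⟩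
    · intro c hcpool
      right
      rw [Finset.card_eq_zero, Finset.filter_eq_empty_iff]
      intro e he hec
      have := (hγ1 e he).1
      rw [Finset.mem_sdiff] at this
      exact (Finset.disjoint_left.1 hdisj hcpool) (hec ▸ this.1)
    · intro c _
      exact hγ2 c


section EdgeDeg

variable {V : Type} [Fintype V] [DecidableEq V]

/-- Number of edges in the edge set `S` incident to `v`. -/
def edeg (S : Finset (Sym2 V)) (v : V) : ℕ := (S.filter (fun e => v ∈ e)).card

lemma edeg_mono {S T : Finset (Sym2 V)} (h : S ⊆ T) (v : V) : edeg S v ≤ edeg T v :=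
  Finset.card_le_card (Finset.filter_subset_filter _ h)

lemma edeg_union {S T : Finset (Sym2 V)} (h : Disjoint S T) (v : V) :
    edeg (S ∪ T) v = edeg S v + edeg T v := by
  unfold edeg
  rw [Finset.filter_union]
  exact Finset.card_union_of_disjoint (Finset.disjoint_filter_filter h)

lemma edeg_insert {S : Finset (Sym2 V)} {e : Sym2 V} (h : e ∉ S) (v : V) :
    edeg (insert e S) v = edeg S v + if v ∈ e then 1 else 0 := by
  unfold edeg
  rw [Finset.filter_insert]
  by_cases hv : v ∈ e
  · rw [if_pos hv, if_pos hv, Finset.card_insert_of_notMem (fun hc => h (Finset.mem_filter.1 hc).1)]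
  · rw [if_neg hv, if_neg hv, Nat.add_zero]

lemma sum_edeg (X : Finset V) (S : Finset (Sym2 V)) :
    ∑ v ∈ X, edeg S v = ∑ e ∈ S, (X.filter (fun v => v ∈ e)).card := by
  unfold edeg
  have h1 : ∀ v : V, (S.filter (fun e => v ∈ e)).card = ∑ e ∈ S, if v ∈ e then 1 else 0 :=
    fun v => Finset.card_filter _ _
  have h2 : ∀ e : Sym2 V, (X.filter (fun v => v ∈ e)).card = ∑ v ∈ X, if v ∈ e then 1 else 0 :=
    fun e => Finset.card_filter _ _
  rw [Finset.sum_congr rfl (fun v _ => h1 v), Finset.sum_comm,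
    Finset.sum_congr rfl (fun e _ => (h2 e).symm)]

lemma support_card_le (S : Finset (Sym2 V)) (γ : Sym2 V → ℕ) (C : Finset ℕ) (v : V) :
    (C.filter (fun c => 1 ≤ edeg (S.filter (fun e => γ e = c)) v)).card ≤ edeg S v := by
  classical
  -- map each color in the support to an incident edge of that color
  have hchoice : ∀ c : ℕ, ∃ e : Sym2 V,
      c ∈ C.filter (fun c => 1 ≤ edeg (S.filter (fun e => γ e = c)) v) →
      e ∈ S.filter (fun e => v ∈ e) ∧ γ e = c := by
    intro c
    by_cases hc : c ∈ C.filter (fun c => 1 ≤ edeg (S.filter (fun e => γ e = c)) v)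
    · rw [Finset.mem_filter] at hc
      have h1 : 1 ≤ ((S.filter (fun e => γ e = c)).filter (fun e => v ∈ e)).card := hc.2
      obtain ⟨e, he⟩ := Finset.card_pos.1 h1
      rw [Finset.mem_filter, Finset.mem_filter] at he
      exact ⟨e, fun _ => ⟨Finset.mem_filter.2 ⟨he.1.1, he.2⟩, he.1.2⟩⟩
    · exact ⟨Sym2.diag v, fun h => absurd h hc⟩
  choose f hf using hchoice
  have hle : (C.filter (fun c => 1 ≤ edeg (S.filter (fun e => γ e = c)) v)).card
      ≤ (S.filter (fun e => v ∈ e)).card := by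
    refine Finset.card_le_card_of_injOn f (fun c hc => (hf c hc).1) ?_
    intro c1 hc1 c2 hc2 heq
    rw [Finset.mem_coe] at hc1 hc2
    rw [← (hf c1 hc1).2, ← (hf c2 hc2).2, heq]
  exact hle

lemma two_ends {e : Sym2 V} (hd : ¬ e.IsDiag) : ∃ x y : V, x ≠ y ∧ e = s(x, y) := by
  induction e with
  | _ x y =>
    refine ⟨x, y, ?_, rfl⟩
    intro h
    subst h
    exact hd (Sym2.isDiag_iff_proj_eq |>.2 rfl)

lemma ends_card_le_two (X : Finset V) {e : Sym2 V} (hd : ¬ e.IsDiag) :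
    (X.filter (fun v => v ∈ e)).card ≤ 2 := by
  obtain ⟨x, y, hxy, rfl⟩ := two_ends hd
  have : X.filter (fun v => v ∈ s(x, y)) ⊆ {x, y} := by
    intro v hv
    rw [Finset.mem_filter, Sym2.mem_iff] at hv
    rcases hv.2 with h | h <;> simp [h]
  calc (X.filter (fun v => v ∈ s(x, y))).card ≤ ({x, y} : Finset V).card :=
        Finset.card_le_card this
    _ ≤ 2 := Finset.card_insert_le _ _ |>.trans (by simp)

end EdgeDeg


open scoped Classical

section GraphFacts

variable {V : Type} [Fintype V] [DecidableEq V]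

lemma forall_mem_pair {P : V → Prop} {a b : V} : (∀ u ∈ s(a, b), P u) ↔ P a ∧ P b := by
  constructor
  · intro h; exact ⟨h a (Sym2.mem_mk_left a b), h b (Sym2.mem_mk_right a b)⟩
  · rintro ⟨ha, hb⟩ u hu
    rcases Sym2.mem_iff.1 hu with rfl | rfl
    · exact ha
    · exact hb

lemma exists_mem_pair {P : V → Prop} {a b : V} : (∃ u ∈ s(a, b), P u) ↔ P a ∨ P b := by
  constructor
  · rintro ⟨u, hu, hP⟩
    rcases Sym2.mem_iff.1 hu with rfl | rfl
    · exact Or.inl hP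
    · exact Or.inr hP
  · rintro (h | h)
    · exact ⟨a, Sym2.mem_mk_left a b, h⟩
    · exact ⟨b, Sym2.mem_mk_right a b, h⟩

lemma eq_pair_of_mem {e : Sym2 V} (hd : ¬e.IsDiag) {w x : V} (hw : w ∈ e) (hx : x ∈ e)
    (hwx : w ≠ x) : e = s(w, x) := by
  obtain ⟨a, b, hab, rfl⟩ := two_ends hd
  rcases Sym2.mem_iff.1 hw with rfl | rfl <;> rcases Sym2.mem_iff.1 hx with rfl | rfl
  · exact absurd rfl hwx
  · rfl
  · exact Sym2.eq_swap
  · exact absurd rfl hwx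

variable (k : ℕ) (G : SimpleGraph V) [DecidableRel G.Adj]

/-- There is a maximal valid (all degrees 0 or ≡1 mod k) sub-edge-set of `G`. -/
lemma exists_maxH :
    ∃ H : Finset (Sym2 V), H ⊆ G.edgeFinset ∧
      (∀ v, edeg H v = 0 ∨ edeg H v % k = 1) ∧
      (∀ S, S ⊆ G.edgeFinset → (∀ v, edeg S v = 0 ∨ edeg S v % k = 1) → H ⊆ S → S = H) := by
  classical
  have hne : ((G.edgeFinset.powerset).filter
      (fun S => ∀ v, edeg S v = 0 ∨ edeg S v % k = 1)).Nonempty := by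
    refine ⟨∅, Finset.mem_filter.2 ⟨Finset.empty_mem_powerset _, fun v => Or.inl ?_⟩⟩
    simp [edeg]
  obtain ⟨H, hH, hmax⟩ := Finset.exists_maximal hne
  rw [Finset.mem_filter, Finset.mem_powerset] at hH
  refine ⟨H, hH.1, hH.2, ?_⟩
  intro S hS1 hS2 hHS
  by_contra hne'
  exact hne' (le_antisymm (hmax (Finset.mem_filter.2 ⟨Finset.mem_powerset.2 hS1, hS2⟩) hHS)
    hHS)

variable {H : Finset (Sym2 V)}

/-- No edge outside H joins two vertices of H-degree 0. -/
lemma no_BB_edge (hk : 2 ≤ k) (hHsub : H ⊆ G.edgeFinset)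
    (hHvalid : ∀ v, edeg H v = 0 ∨ edeg H v % k = 1)
    (hHmax : ∀ S, S ⊆ G.edgeFinset → (∀ v, edeg S v = 0 ∨ edeg S v % k = 1) → H ⊆ S → S = H)
    {e : Sym2 V} (he : e ∈ G.edgeFinset) (heH : e ∉ H)
    (h0 : ∀ u ∈ e, edeg H u = 0) : False := by
  have hvalid : ∀ v, edeg (insert e H) v = 0 ∨ edeg (insert e H) v % k = 1 := by
    intro v
    rw [edeg_insert heH]
    by_cases hv : v ∈ e
    · rw [if_pos hv, h0 v hv]
      right
      simpa using Nat.mod_eq_of_lt (by omega)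
    · rw [if_neg hv, Nat.add_zero]
      exact hHvalid v
  have hsub : insert e H ⊆ G.edgeFinset := Finset.insert_subset he hHsub
  have := hHmax _ hsub hvalid (Finset.subset_insert e H)
  exact heH (this ▸ Finset.mem_insert_self e H)

/-- Every vertex of positive H-degree has fewer than k edges (outside H) to
vertices of H-degree 0. -/
lemma b_star_bound (hk : 2 ≤ k) (hHsub : H ⊆ G.edgeFinset)
    (hHvalid : ∀ v, edeg H v = 0 ∨ edeg H v % k = 1)
    (hHmax : ∀ S, S ⊆ G.edgeFinset → (∀ v, edeg S v = 0 ∨ edeg S v % k = 1) → H ⊆ S → S = H)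
    {a : V} (ha : edeg H a % k = 1) :
    ((G.edgeFinset \ H).filter
      (fun e => a ∈ e ∧ ∃ u ∈ e, u ≠ a ∧ edeg H u = 0)).card < k := by
  by_contra hcon
  push_neg at hcon
  obtain ⟨T₀, hT₀sub, hT₀card⟩ := Finset.exists_subset_card_eq hcon
  have hT₀prop : ∀ e ∈ T₀, e ∈ G.edgeFinset ∧ e ∉ H ∧ a ∈ e ∧
      ∃ u ∈ e, u ≠ a ∧ edeg H u = 0 := by
    intro e he
    have := hT₀sub he
    rw [Finset.mem_filter, Finset.mem_sdiff] at this
    exact ⟨this.1.1, this.1.2, this.2.1, this.2.2⟩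
  have hdisjT : Disjoint H T₀ := by
    rw [Finset.disjoint_right]
    intro e he
    exact (hT₀prop e he).2.1
  have hvalid : ∀ v, edeg (H ∪ T₀) v = 0 ∨ edeg (H ∪ T₀) v % k = 1 := by
    intro v
    rw [edeg_union hdisjT]
    by_cases hva : v = a
    · subst hva
      have hfull : edeg T₀ v = k := by
        unfold edeg
        rw [Finset.filter_true_of_mem (fun e he => (hT₀prop e he).2.2.1), hT₀card]
      rw [hfull]
      right
      rw [Nat.add_mod_right]
      exact ha
    · have hle : edeg T₀ v ≤ 1 := by
        unfold edeg
        have hsub1 : T₀.filter (fun e => v ∈ e) ⊆ {s(a, v)} := by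
          intro e he
          rw [Finset.mem_filter] at he
          have hp := hT₀prop e he.1
          have hnd : ¬e.IsDiag := G.not_isDiag_of_mem_edgeSet
            (SimpleGraph.mem_edgeFinset.1 hp.1)
          rw [Finset.mem_singleton, eq_pair_of_mem hnd hp.2.2.1 he.2 (Ne.symm hva)]
        exact le_trans (Finset.card_le_card hsub1) (by simp)
      rcases Nat.le_one_iff_eq_zero_or_eq_one.1 hle with h0 | h1
      · rw [h0, Nat.add_zero]
        exact hHvalid v
      · -- v is the B-endpoint of an edge of T₀, so edeg H v = 0
        have hex : ∃ e ∈ T₀, v ∈ e := by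
          by_contra hno
          push_neg at hno
          have hemp : T₀.filter (fun e => v ∈ e) = ∅ := Finset.filter_eq_empty_iff.2 hno
          unfold edeg at h1
          rw [hemp] at h1
          simp at h1
        obtain ⟨e, heT, hve⟩ := hex
        have hp := hT₀prop e heT
        obtain ⟨u, hu, hua, hu0⟩ := hp.2.2.2
        have hnd : ¬e.IsDiag := G.not_isDiag_of_mem_edgeSet
          (SimpleGraph.mem_edgeFinset.1 hp.1)
        have he_eq : e = s(a, v) := eq_pair_of_mem hnd hp.2.2.1 hve (Ne.symm hva)
        have huv : u = v := by
          rw [he_eq, Sym2.mem_iff] at hu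
          rcases hu with rfl | rfl
          · exact absurd rfl hua
          · rfl
        have hv0 : edeg H v = 0 := huv ▸ hu0
        rw [h1, hv0]
        right
        simpa using Nat.mod_eq_of_lt (by omega)
  have hsub : H ∪ T₀ ⊆ G.edgeFinset := by
    refine Finset.union_subset hHsub ?_
    intro e he
    exact (hT₀prop e he).1
  have heq := hHmax _ hsub hvalid Finset.subset_union_left
  have hT₀ne : T₀.Nonempty := by
    rw [← Finset.card_pos, hT₀card]; omega
  obtain ⟨e, he⟩ := hT₀ne
  exact (hT₀prop e he).2.1 (heq ▸ Finset.mem_union_right H he)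


/-- Via AFK: edge sets of `G - H` inside a set of vertices of H-degree ≡ 1 are sparse. -/
lemma afk_inside
    (hAFK : ∀ (W : Type) [Fintype W] [DecidableEq W] (HW : SimpleGraph W)
      [DecidableRel HW.Adj],
      (k - 1) * Fintype.card W + 1 ≤ HW.edgeFinset.card →
      ∃ H' : SimpleGraph W, H' ≤ HW ∧ H'.edgeSet.Nonempty ∧
        ∀ v : W, k ∣ Nat.card (H'.neighborSet v))
    (hk : 2 ≤ k) (hHsub : H ⊆ G.edgeFinset)
    (hHvalid : ∀ v, edeg H v = 0 ∨ edeg H v % k = 1)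
    (hHmax : ∀ S, S ⊆ G.edgeFinset → (∀ v, edeg S v = 0 ∨ edeg S v % k = 1) → H ⊆ S → S = H)
    (T : Finset V) (hT : ∀ x ∈ T, edeg H x % k = 1) :
    ((G.edgeFinset \ H).filter (fun e => ∀ u ∈ e, u ∈ T)).card ≤ (k - 1) * T.card := by
  classical
  by_contra hcon
  push_neg at hcon
  set ST := (G.edgeFinset \ H).filter (fun e => ∀ u ∈ e, u ∈ T) with hST
  have hSTprop : ∀ e ∈ ST, e ∈ G.edgeFinset ∧ e ∉ H ∧ ∀ u ∈ e, u ∈ T := by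
    intro e he
    rw [hST, Finset.mem_filter, Finset.mem_sdiff] at he
    exact ⟨he.1.1, he.1.2, he.2⟩
  let GW : SimpleGraph {x // x ∈ T} :=
    { Adj := fun a b => a ≠ b ∧ s(a.1, b.1) ∈ ST
      symm := ⟨by
        rintro a b ⟨hne, h⟩
        exact ⟨hne.symm, by rwa [Sym2.eq_swap]⟩⟩
      loopless := ⟨fun a h => h.1 rfl⟩ }
  letI : DecidableRel GW.Adj := Classical.decRel _
  have hinj : Function.Injective (Sym2.map (Subtype.val : {x // x ∈ T} → V)) :=
    Sym2.map.injective Subtype.val_injective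
  have himg : GW.edgeFinset.image (Sym2.map Subtype.val) = ST := by
    ext f
    constructor
    · intro hf
      rw [Finset.mem_image] at hf
      obtain ⟨e', he', rfl⟩ := hf
      induction e' with
      | _ a b =>
        rw [SimpleGraph.mem_edgeFinset, GW.mem_edgeSet] at he'
        rw [Sym2.map_pair_eq]
        exact he'.2
    · intro hf
      have hp := hSTprop f hf
      have hnd : ¬f.IsDiag := G.not_isDiag_of_mem_edgeSet (SimpleGraph.mem_edgeFinset.1 hp.1)
      obtain ⟨x, y, hxy, rfl⟩ := two_ends hnd
      have hxT : x ∈ T := hp.2.2 x (Sym2.mem_mk_left x y)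
      have hyT : y ∈ T := hp.2.2 y (Sym2.mem_mk_right x y)
      have hadj : GW.Adj ⟨x, hxT⟩ ⟨y, hyT⟩ :=
        ⟨fun h => hxy (congrArg Subtype.val h), hf⟩
      rw [Finset.mem_image]
      exact ⟨s(⟨x, hxT⟩, ⟨y, hyT⟩),
        SimpleGraph.mem_edgeFinset.2 (GW.mem_edgeSet.2 hadj), Sym2.map_pair_eq _ _ _⟩
  have hcard : GW.edgeFinset.card = ST.card := by
    rw [← himg, Finset.card_image_of_injective _ hinj]
  have hAFKin : (k - 1) * Fintype.card {x // x ∈ T} + 1 ≤ GW.edgeFinset.card := by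
    rw [Fintype.card_coe, hcard]
    omega
  obtain ⟨H', hH'le, hH'ne, hH'div⟩ := hAFK _ GW hAFKin
  letI : DecidableRel H'.Adj := Classical.decRel _
  set D := H'.edgeFinset.image (Sym2.map Subtype.val) with hD
  have hDsub : D ⊆ ST := by
    rw [← himg]
    exact Finset.image_subset_image (SimpleGraph.edgeFinset_mono hH'le)
  have hDne : D.Nonempty := by
    obtain ⟨e, he⟩ := hH'ne
    exact ⟨Sym2.map Subtype.val e, Finset.mem_image_of_mem _ (SimpleGraph.mem_edgeFinset.2 he)⟩
  have hD0 : ∀ x : V, x ∉ T → edeg D x = 0 := by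
    intro x hx
    have hemp : D.filter (fun e => x ∈ e) = ∅ := by
      rw [Finset.filter_eq_empty_iff]
      rintro f hf hxf
      rw [hD, Finset.mem_image] at hf
      obtain ⟨e', _, rfl⟩ := hf
      rw [Sym2.mem_map] at hxf
      obtain ⟨a, _, hav⟩ := hxf
      exact hx (hav ▸ a.2)
    unfold edeg
    rw [hemp]
    simp
  have hDdiv : ∀ (x : V), ∀ hx : x ∈ T, k ∣ edeg D x := by
    intro x hx
    have hfil : D.filter (fun e => x ∈ e)
        = (H'.edgeFinset.filter (fun e' => (⟨x, hx⟩ : {x // x ∈ T}) ∈ e')).image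
            (Sym2.map Subtype.val) := by
      ext f
      simp only [Finset.mem_filter, Finset.mem_image, hD]
      constructor
      · rintro ⟨⟨e', he', rfl⟩, hxf⟩
        rw [Sym2.mem_map] at hxf
        obtain ⟨a, ha, hav⟩ := hxf
        have haa : a = ⟨x, hx⟩ := Subtype.ext hav
        exact ⟨e', ⟨he', haa ▸ ha⟩, rfl⟩
      · rintro ⟨e', ⟨he', hxe'⟩, rfl⟩
        exact ⟨⟨e', he', rfl⟩, Sym2.mem_map.2 ⟨⟨x, hx⟩, hxe', rfl⟩⟩
    have hdeg : edeg D x = H'.degree ⟨x, hx⟩ := by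
      unfold edeg
      rw [hfil, Finset.card_image_of_injective _ hinj, ← SimpleGraph.incidenceFinset_eq_filter,
        SimpleGraph.card_incidenceFinset_eq_degree]
    rw [hdeg, ← SimpleGraph.card_neighborSet_eq_degree, ← Nat.card_eq_fintype_card]
    exact hH'div _
  have hdisjD : Disjoint H D := by
    rw [Finset.disjoint_right]
    intro e he
    exact (hSTprop e (hDsub he)).2.1
  have hvalid : ∀ v, edeg (H ∪ D) v = 0 ∨ edeg (H ∪ D) v % k = 1 := by
    intro v
    rw [edeg_union hdisjD]
    by_cases hv : v ∈ T
    · right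
      obtain ⟨m, hm⟩ := hDdiv v hv
      rw [hm, Nat.mul_comm, Nat.add_mul_mod_self_right]
      exact hT v hv
    · rw [hD0 v hv, Nat.add_zero]
      exact hHvalid v
  have hsub : H ∪ D ⊆ G.edgeFinset := by
    refine Finset.union_subset hHsub ?_
    intro e he
    exact (hSTprop e (hDsub he)).1
  have heq := hHmax _ hsub hvalid Finset.subset_union_left
  obtain ⟨e, he⟩ := hDne
  exact (hSTprop e (hDsub he)).2.1 (heq ▸ Finset.mem_union_right H he)

end GraphFacts

section DegPeel

variable {V : Type} [Fintype V] [DecidableEq V]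

/-- Every nonempty vertex set contains a vertex of small degree in `G - H`. -/
lemma degbound (k : ℕ) (G : SimpleGraph V) [DecidableRel G.Adj] {H : Finset (Sym2 V)}
    (hAFK : ∀ (W : Type) [Fintype W] [DecidableEq W] (HW : SimpleGraph W)
      [DecidableRel HW.Adj],
      (k - 1) * Fintype.card W + 1 ≤ HW.edgeFinset.card →
      ∃ H' : SimpleGraph W, H' ≤ HW ∧ H'.edgeSet.Nonempty ∧
        ∀ v : W, k ∣ Nat.card (H'.neighborSet v))
    (hk : 2 ≤ k) (hHsub : H ⊆ G.edgeFinset)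
    (hHvalid : ∀ v, edeg H v = 0 ∨ edeg H v % k = 1)
    (hHmax : ∀ S, S ⊆ G.edgeFinset → (∀ v, edeg S v = 0 ∨ edeg S v % k = 1) → H ⊆ S → S = H)
    (T : Finset V) (hTne : T.Nonempty) :
    ∃ a ∈ T, edeg ((G.edgeFinset \ H).filter (fun e => ∀ u ∈ e, u ∈ T)) a ≤ 3 * (k - 1) := by
  classical
  by_contra hcon
  push_neg at hcon
  set ST := ((G.edgeFinset \ H).filter (fun e => ∀ u ∈ e, u ∈ T)) with hSTdef
  have hSTprop : ∀ e ∈ ST, e ∈ G.edgeFinset ∧ e ∉ H ∧ (∀ u ∈ e, u ∈ T) ∧ ¬ e.IsDiag := by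
    intro e he
    rw [hSTdef, Finset.mem_filter, Finset.mem_sdiff] at he
    exact ⟨he.1.1, he.1.2, he.2,
      G.not_isDiag_of_mem_edgeSet (SimpleGraph.mem_edgeFinset.1 he.1.1)⟩
  set A := T.filter (fun x => edeg H x % k = 1) with hA
  have hBzero : ∀ x ∈ T, x ∉ A → edeg H x = 0 := by
    intro x hxT hxA
    rcases hHvalid x with h | h
    · exact h
    · exact absurd (Finset.mem_filter.2 ⟨hxT, h⟩) hxA
  set SAA := ST.filter (fun e => ∀ u ∈ e, u ∈ A) with hSAAdef
  have hAAcard : SAA.card ≤ (k - 1) * A.card := by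
    have hsub2 : SAA ⊆ (G.edgeFinset \ H).filter (fun e => ∀ u ∈ e, u ∈ A) := by
      intro e he
      rw [hSAAdef, Finset.mem_filter, hSTdef, Finset.mem_filter] at he
      rw [Finset.mem_filter]
      exact ⟨he.1.1, he.2⟩
    exact le_trans (Finset.card_le_card hsub2)
      (afk_inside k G hAFK hk hHsub hHvalid hHmax A (fun x hx => (Finset.mem_filter.1 hx).2))
  have hABsub : ST \ SAA ⊆ A.biUnion
      (fun a => (G.edgeFinset \ H).filter (fun e => a ∈ e ∧ ∃ u ∈ e, u ≠ a ∧ edeg H u = 0)) := by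
    intro e he
    rw [Finset.mem_sdiff] at he
    have hp := hSTprop e he.1
    have heE' : e ∈ G.edgeFinset \ H := Finset.mem_sdiff.2 ⟨hp.1, hp.2.1⟩
    obtain ⟨x, y, hxy, rfl⟩ := two_ends hp.2.2.2
    have hnotall : ¬ (x ∈ A ∧ y ∈ A) := by
      intro hall
      exact he.2 (Finset.mem_filter.2 ⟨he.1, forall_mem_pair.2 hall⟩)
    have hxT := hp.2.2.1 x (Sym2.mem_mk_left x y)
    have hyT := hp.2.2.1 y (Sym2.mem_mk_right x y)
    by_cases hyA : y ∈ A
    · have hxA : x ∉ A := fun h => hnotall ⟨h, hyA⟩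
      have hx0 := hBzero x hxT hxA
      exact Finset.mem_biUnion.2 ⟨y, hyA, Finset.mem_filter.2 ⟨heE',
        Sym2.mem_mk_right x y, x, Sym2.mem_mk_left x y, hxy, hx0⟩⟩
    · have hy0 := hBzero y hyT hyA
      by_cases hxA : x ∈ A
      · exact Finset.mem_biUnion.2 ⟨x, hxA, Finset.mem_filter.2 ⟨heE',
          Sym2.mem_mk_left x y, y, Sym2.mem_mk_right x y, fun h => hxy h.symm, hy0⟩⟩
      · have hx0 := hBzero x hxT hxA
        exact absurd ((forall_mem_pair (P := fun u => edeg H u = 0)).2 ⟨hx0, hy0⟩)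
          (fun h => no_BB_edge k G hk hHsub hHvalid hHmax hp.1 hp.2.1 h)
  have hABcard : (ST \ SAA).card ≤ A.card * (k - 1) := by
    refine le_trans (Finset.card_le_card hABsub) (le_trans Finset.card_biUnion_le ?_)
    have hbnd : ∀ a ∈ A, ((G.edgeFinset \ H).filter
        (fun e => a ∈ e ∧ ∃ u ∈ e, u ≠ a ∧ edeg H u = 0)).card ≤ k - 1 := by
      intro a ha
      have := b_star_bound k G hk hHsub hHvalid hHmax (Finset.mem_filter.1 ha).2
      omega
    calc ∑ a ∈ A, ((G.edgeFinset \ H).filter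
          (fun e => a ∈ e ∧ ∃ u ∈ e, u ≠ a ∧ edeg H u = 0)).card
        ≤ A.card • (k - 1) := Finset.sum_le_card_nsmul _ _ _ hbnd
      _ = A.card * (k - 1) := by rw [smul_eq_mul]
  have hlow : (3 * (k - 1) + 1) * A.card ≤ ∑ a ∈ A, edeg ST a := by
    calc (3 * (k - 1) + 1) * A.card = A.card • (3 * (k - 1) + 1) := by
          rw [smul_eq_mul, Nat.mul_comm]
      _ ≤ ∑ a ∈ A, edeg ST a := Finset.card_nsmul_le_sum _ _ _ (fun a ha => by
          have := hcon a (Finset.mem_filter.1 ha).1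
          omega)
  have hup : ∑ a ∈ A, edeg ST a ≤ 2 * SAA.card + (ST \ SAA).card := by
    rw [sum_edeg]
    have hsplit : ST = SAA ∪ (ST \ SAA) :=
      (Finset.union_sdiff_of_subset (Finset.filter_subset _ _)).symm
    nth_rewrite 1 [hsplit]
    rw [Finset.sum_union Finset.disjoint_sdiff]
    have hb1 : ∑ e ∈ SAA, (A.filter (fun v => v ∈ e)).card ≤ 2 * SAA.card := by
      calc ∑ e ∈ SAA, (A.filter (fun v => v ∈ e)).card
          ≤ SAA.card • 2 := Finset.sum_le_card_nsmul _ _ _ (fun e he =>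
            ends_card_le_two A (hSTprop e (Finset.filter_subset _ _ he)).2.2.2)
        _ = 2 * SAA.card := by rw [smul_eq_mul, Nat.mul_comm]
    have hb2 : ∑ e ∈ ST \ SAA, (A.filter (fun v => v ∈ e)).card ≤ (ST \ SAA).card := by
      calc ∑ e ∈ ST \ SAA, (A.filter (fun v => v ∈ e)).card
          ≤ (ST \ SAA).card • 1 := by
            refine Finset.sum_le_card_nsmul _ _ _ ?_
            intro e he
            rw [Finset.mem_sdiff] at he
            have hp := hSTprop e he.1
            obtain ⟨x, y, hxy, rfl⟩ := two_ends hp.2.2.2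
            have hnotall : ¬ (x ∈ A ∧ y ∈ A) := by
              intro hall
              exact he.2 (Finset.mem_filter.2 ⟨he.1, forall_mem_pair.2 hall⟩)
            by_cases hyA : y ∈ A
            · have hxA : x ∉ A := fun h => hnotall ⟨h, hyA⟩
              have hss : A.filter (fun v => v ∈ s(x, y)) ⊆ {y} := by
                intro u hu
                rw [Finset.mem_filter] at hu
                rcases Sym2.mem_iff.1 hu.2 with rfl | rfl
                · exact absurd hu.1 hxA
                · exact Finset.mem_singleton_self u
              exact le_trans (Finset.card_le_card hss) (by simp)
            · have hss : A.filter (fun v => v ∈ s(x, y)) ⊆ {x} := by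
                intro u hu
                rw [Finset.mem_filter] at hu
                rcases Sym2.mem_iff.1 hu.2 with rfl | rfl
                · exact Finset.mem_singleton_self u
                · exact absurd hu.1 hyA
              exact le_trans (Finset.card_le_card hss) (by simp)
        _ = (ST \ SAA).card := by rw [smul_eq_mul, Nat.mul_one]
    omega
  have hA0 : A.card = 0 := by
    have h1 := le_trans hlow hup
    have e1 : (3 * (k - 1) + 1) * A.card = 3 * ((k - 1) * A.card) + A.card := by ring
    have e2 : A.card * (k - 1) = (k - 1) * A.card := Nat.mul_comm _ _
    omega
  rw [Finset.card_eq_zero] at hA0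
  obtain ⟨a0, ha0⟩ := hTne
  have h1 : 1 ≤ edeg ST a0 := by
    have := hcon a0 ha0
    omega
  obtain ⟨e, he⟩ := Finset.card_pos.1 h1
  rw [Finset.mem_filter] at he
  have hp := hSTprop e he.1
  refine no_BB_edge k G hk hHsub hHvalid hHmax hp.1 hp.2.1 ?_
  intro u hu
  refine hBzero u (hp.2.2.1 u hu) ?_
  rw [hA0]
  exact Finset.notMem_empty u

lemma peel (d : ℕ) (E' : Finset (Sym2 V))
    (hdeg : ∀ T : Finset V, T.Nonempty →
      ∃ a ∈ T, edeg (E'.filter (fun e => ∀ u ∈ e, u ∈ T)) a ≤ d) :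
    ∀ (n : ℕ) (T : Finset V), T.card = n → ∃ l : List V, l.toFinset = T ∧ l.Nodup ∧
      ∀ (p : List V) (x : V) (s : List V), l = p ++ x :: s →
        edeg (E'.filter (fun e => ∀ u ∈ e, u ∈ insert x p.toFinset)) x ≤ d := by
  intro n
  induction n with
  | zero =>
    intro T hT
    rw [Finset.card_eq_zero] at hT
    subst hT
    refine ⟨[], by simp, List.nodup_nil, ?_⟩
    intro p x s h
    exact absurd h (by simp)
  | succ m ih =>
    intro T hT
    have hTne : T.Nonempty := by rw [← Finset.card_pos, hT]; omega
    obtain ⟨a, haT, ha⟩ := hdeg T hTne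
    obtain ⟨l', hl'fin, hl'nd, hl'prop⟩ := ih (T.erase a)
      (by rw [Finset.card_erase_of_mem haT, hT]; omega)
    refine ⟨l' ++ [a], ?_, ?_, ?_⟩
    · ext v
      simp only [List.toFinset_append, hl'fin, List.toFinset_cons, List.toFinset_nil,
        LawfulSingleton.insert_empty_eq, Finset.mem_union, Finset.mem_erase, Finset.mem_singleton]
      constructor
      · rintro (⟨_, hv⟩ | rfl)
        · exact hv
        · exact haT
      · intro hv
        by_cases hva : v = a
        · exact Or.inr hva
        · exact Or.inl ⟨hva, hv⟩
    · rw [List.nodup_append]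
      refine ⟨hl'nd, List.nodup_singleton a, ?_⟩
      intro x hx b hb hxa
      simp only [List.mem_singleton] at hb
      rw [hb] at hxa
      have hmem : x ∈ T.erase a := hl'fin ▸ List.mem_toFinset.2 hx
      exact (Finset.ne_of_mem_erase hmem) hxa
    · intro p x s h
      rcases List.eq_nil_or_concat s with rfl | ⟨s', b, rfl⟩
      · obtain ⟨hp, hx⟩ := List.append_inj' h (by simp)
        have hxa : a = x := by simpa using hx
        subst hxa
        subst hp
        rw [hl'fin, Finset.insert_erase haT]
        exact ha
      · have h2 : l' ++ [a] = (p ++ x :: s') ++ [b] := by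
          rw [h]
          simp [List.concat_eq_append]
        obtain ⟨hpre, _⟩ := List.append_inj' h2 (by simp)
        exact hl'prop p x s' hpre

end DegPeel

section Grand

variable {V : Type} [Fintype V] [DecidableEq V]

lemma grand (k d p : ℕ) (hk : 2 ≤ k) (hpk : 2 * d + k ≤ p + 1)
    (pool reserve : Finset ℕ) (hdisj : Disjoint pool reserve)
    (hpc : pool.card = p) (hrc : reserve.card = p)
    (E' : Finset (Sym2 V)) (hnd : ∀ e ∈ E', ¬ e.IsDiag) :
    ∀ (rest pre : List V),
      (pre ++ rest).Nodup →
      (∀ (p₁ : List V) (x : V) (s : List V), pre ++ rest = p₁ ++ x :: s →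
        edeg (E'.filter (fun e => ∀ u ∈ e, u ∈ insert x p₁.toFinset)) x ≤ d) →
      (∀ e ∈ E', ∀ u ∈ e, u ∈ (pre ++ rest).toFinset) →
      ∀ (colored : Finset (Sym2 V)) (γ : Sym2 V → ℕ),
      colored ⊆ E' →
      (∀ e ∈ colored, γ e ∈ pool ∪ reserve) →
      (∀ e ∈ E', (e ∈ colored ↔ ∃ u ∈ e, u ∈ pre.toFinset)) →
      (∀ x ∈ rest, ∀ c : ℕ, edeg (colored.filter (fun e => γ e = c)) x ≤ 1) →
      (∀ v : V, v ∈ pre.toFinset → ∀ c : ℕ,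
        edeg (colored.filter (fun e => γ e = c)) v = 0 ∨
        edeg (colored.filter (fun e => γ e = c)) v % k = 1) →
      ∃ γT : Sym2 V → ℕ,
        (∀ e ∈ E', γT e ∈ pool ∪ reserve) ∧
        (∀ v : V, ∀ c : ℕ,
          edeg (E'.filter (fun e => γT e = c)) v = 0 ∨
          edeg (E'.filter (fun e => γT e = c)) v % k = 1) := by
  intro rest
  induction rest with
  | nil =>
    intro pre _ _ hcover colored γ hsub hrange hcol hJ1 hval
    have hceq : colored = E' := by
      refine Finset.Subset.antisymm hsub ?_
      intro e he
      obtain ⟨x, y, hxy, rfl⟩ := two_ends (hnd e he)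
      refine (hcol _ he).2 ⟨x, Sym2.mem_mk_left x y, ?_⟩
      have hx := hcover _ he x (Sym2.mem_mk_left x y)
      simpa using hx
    refine ⟨γ, ?_, ?_⟩
    · intro e he
      exact hrange e (hceq ▸ he)
    · intro v c
      by_cases hv : v ∈ pre.toFinset
      · have := hval v hv c
        rwa [hceq] at this
      · left
        unfold edeg
        rw [Finset.card_eq_zero, Finset.filter_eq_empty_iff]
        intro e he
        rw [Finset.mem_filter] at he
        intro hve
        have := hcover e he.1 v hve
        simp only [List.append_nil] at this
        exact hv this
  | cons w tl ih =>
    intro pre hnodup hP hcover colored γ hsub hrange hcol hJ1 hval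
    classical
    have hlist : (pre ++ [w]) ++ tl = pre ++ w :: tl := by simp
    obtain ⟨hpn, hcn, hdisjl⟩ := List.nodup_append.1 hnodup
    have hwpre : w ∉ pre := fun hw => hdisjl w hw w List.mem_cons_self rfl
    have hwtl : w ∉ tl := (List.nodup_cons.1 hcn).1
    have htlpre : ∀ x ∈ tl, x ∉ pre := fun x hx hxp => hdisjl x hxp x (List.mem_cons_of_mem w hx) rfl
    set I := E'.filter (fun e => w ∈ e ∧ e ∉ colored) with hIdef
    have hImem : ∀ e ∈ I, e ∈ E' ∧ w ∈ e ∧ e ∉ colored := by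
      intro e he
      rw [hIdef, Finset.mem_filter] at he
      exact ⟨he.1, he.2.1, he.2.2⟩
    have hIother : ∀ e ∈ I, ∃ x, x ∈ tl ∧ x ≠ w ∧ x ∈ e ∧ e = s(w, x) := by
      intro e he
      obtain ⟨heE, hwe, hec⟩ := hImem e he
      have key : ∀ x, x ∈ e → x ≠ w → x ∈ tl ∧ e = s(w, x) := by
        intro x hx hxw
        have heq : e = s(w, x) := eq_pair_of_mem (hnd _ heE) hwe hx (Ne.symm hxw)
        have hxnpre : x ∉ pre := by
          intro hxp
          exact hec ((hcol _ heE).2 ⟨x, hx, List.mem_toFinset.2 hxp⟩)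
        have hxall := hcover _ heE x hx
        rw [List.toFinset_append, Finset.mem_union, List.mem_toFinset, List.mem_toFinset] at hxall
        rcases hxall with h | h
        · exact absurd h hxnpre
        · rcases List.mem_cons.1 h with h' | h'
          · exact absurd h' hxw
          · exact ⟨h', heq⟩
      obtain ⟨a, b, hab, heab⟩ := two_ends (hnd e heE)
      have hwmem := hwe
      rw [heab, Sym2.mem_iff] at hwmem
      rcases hwmem with rfl | rfl
      · have hbw : b ≠ w := fun h => hab h.symm
        have hbmem : b ∈ e := by rw [heab]; exact Sym2.mem_mk_right w b
        obtain ⟨h1, h2⟩ := key b hbmem hbw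
        exact ⟨b, h1, hbw, hbmem, h2⟩
      · have haw : a ≠ w := hab
        have hamem : a ∈ e := by rw [heab]; exact Sym2.mem_mk_left a w
        obtain ⟨h1, h2⟩ := key a hamem haw
        exact ⟨a, h1, haw, hamem, h2⟩
    have hOw : edeg colored w ≤ d := by
      have hPw := hP pre w tl rfl
      unfold edeg
      refine le_trans (Finset.card_le_card ?_) hPw
      intro e he
      rw [Finset.mem_filter] at he
      have heE : e ∈ E' := hsub he.1
      rw [Finset.mem_filter, Finset.mem_filter]
      refine ⟨⟨heE, ?_⟩, he.2⟩
      intro u hu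
      by_cases huw : u = w
      · rw [huw]
        exact Finset.mem_insert_self w _
      · have heq : e = s(w, u) := eq_pair_of_mem (hnd e heE) he.2 hu (Ne.symm huw)
        obtain ⟨u₀, hu₀e, hu₀pre⟩ := (hcol e heE).1 he.1
        rw [heq, Sym2.mem_iff] at hu₀e
        rcases hu₀e with rfl | rfl
        · exact absurd (List.mem_toFinset.1 hu₀pre) hwpre
        · exact Finset.mem_insert_of_mem hu₀pre
    have hFx : ∀ x ∈ tl, ∀ e ∈ I, x ∈ e → edeg colored x + 1 ≤ d := by
      intro x hxtl e heI hxe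
      obtain ⟨t1, t2, htl⟩ := List.append_of_mem hxtl
      have hdecomp : pre ++ w :: tl = (pre ++ w :: t1) ++ x :: t2 := by
        rw [htl]; simp
      have hPx := hP _ x _ hdecomp
      obtain ⟨heE, hwe, hec⟩ := hImem e heI
      have hxw : x ≠ w := by
        intro h
        exact hwtl (h ▸ hxtl)
      have hxpre := htlpre x hxtl
      have hins : insert e (colored.filter (fun f => x ∈ f)) ⊆
          (E'.filter (fun f => ∀ u ∈ f, u ∈ insert x (pre ++ w :: t1).toFinset)).filter
            (fun f => x ∈ f) := by
        intro f hf
        rcases Finset.mem_insert.1 hf with rfl | hf'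
        · rw [Finset.mem_filter, Finset.mem_filter]
          refine ⟨⟨heE, ?_⟩, hxe⟩
          have heq : f = s(w, x) := eq_pair_of_mem (hnd f heE) hwe hxe hxw.symm
          intro u hu
          rw [heq, Sym2.mem_iff] at hu
          rcases hu with rfl | rfl
          · refine Finset.mem_insert_of_mem ?_
            rw [List.mem_toFinset]
            exact List.mem_append_right pre List.mem_cons_self
          · exact Finset.mem_insert_self u _
        · rw [Finset.mem_filter] at hf'
          have hfE : f ∈ E' := hsub hf'.1
          rw [Finset.mem_filter, Finset.mem_filter]
          refine ⟨⟨hfE, ?_⟩, hf'.2⟩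
          intro u hu
          by_cases hux : u = x
          · rw [hux]
            exact Finset.mem_insert_self x _
          · have heq : f = s(x, u) := eq_pair_of_mem (hnd f hfE) hf'.2 hu (Ne.symm hux)
            obtain ⟨u₀, hu₀e, hu₀pre⟩ := (hcol f hfE).1 hf'.1
            rw [heq, Sym2.mem_iff] at hu₀e
            rcases hu₀e with rfl | rfl
            · exact absurd (List.mem_toFinset.1 hu₀pre) hxpre
            · refine Finset.mem_insert_of_mem ?_
              rw [List.mem_toFinset]
              exact List.mem_append_left _ (List.mem_toFinset.1 hu₀pre)
      have hcards := Finset.card_le_card hins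
      rw [Finset.card_insert_of_notMem
        (fun hc => hec (Finset.mem_filter.1 hc).1)] at hcards
      exact le_trans hcards hPx
    set forb : Sym2 V → Finset ℕ := fun e =>
      (pool ∪ reserve).filter (fun c => ∃ u ∈ e,
        1 ≤ edeg (colored.filter (fun e' => γ e' = c)) u) with hforbdef
    have hforb : ∀ e ∈ I, (forb e).card + k ≤ p := by
      intro e heI
      obtain ⟨heE, hwe, hec⟩ := hImem e heI
      obtain ⟨x, hxtl, hxw, hxe, hewx⟩ := hIother e heI
      have hsub2 : forb e ⊆
          ((pool ∪ reserve).filter (fun c => 1 ≤ edeg (colored.filter (fun e' => γ e' = c)) w))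
          ∪ ((pool ∪ reserve).filter
              (fun c => 1 ≤ edeg (colored.filter (fun e' => γ e' = c)) x)) := by
        intro c hc
        rw [hforbdef, Finset.mem_filter] at hc
        obtain ⟨hcpr, u, hue, h1⟩ := hc
        rw [hewx, Sym2.mem_iff] at hue
        rcases hue with rfl | rfl
        · exact Finset.mem_union_left _ (Finset.mem_filter.2 ⟨hcpr, h1⟩)
        · exact Finset.mem_union_right _ (Finset.mem_filter.2 ⟨hcpr, h1⟩)
      have hc1 := support_card_le colored γ (pool ∪ reserve) w
      have hc2 := support_card_le colored γ (pool ∪ reserve) x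
      have hcu := Finset.card_union_le
        ((pool ∪ reserve).filter (fun c => 1 ≤ edeg (colored.filter (fun e' => γ e' = c)) w))
        ((pool ∪ reserve).filter (fun c => 1 ≤ edeg (colored.filter (fun e' => γ e' = c)) x))
      have hle := Finset.card_le_card hsub2
      have hfx := hFx x hxtl e heI hxe
      omega
    obtain ⟨δ, hδr, hδpool, hδres⟩ := allocAux k p hk pool reserve hdisj hpc hrc forb
      I.card I rfl pool (Finset.Subset.refl pool) hforb
      (fun c hc hc' => absurd hc hc')
    set γ' : Sym2 V → ℕ := fun e => if e ∈ I then δ e else γ e with hγ'def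
    set colored' := colored ∪ I with hcol'def
    have hdisjCI : Disjoint colored I := by
      rw [Finset.disjoint_right]
      intro e he
      exact (hImem e he).2.2
    have hfiltereq : ∀ c : ℕ, colored'.filter (fun e => γ' e = c)
        = colored.filter (fun e => γ e = c) ∪ I.filter (fun e => δ e = c) := by
      intro c
      ext e
      rw [hcol'def, Finset.mem_union, Finset.mem_filter, Finset.mem_filter, Finset.mem_filter,
        Finset.mem_union]
      constructor
      · rintro ⟨he, hc⟩
        by_cases heI : e ∈ I
        · right
          rw [hγ'def] at hc
          simp only [if_pos heI] at hc
          exact ⟨heI, hc⟩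
        · left
          rcases he with h | h
          · rw [hγ'def] at hc
            simp only [if_neg heI] at hc
            exact ⟨h, hc⟩
          · exact absurd h heI
      · rintro (⟨he, hc⟩ | ⟨he, hc⟩)
        · have heI : e ∉ I := Finset.disjoint_left.1 hdisjCI he
          refine ⟨Or.inl he, ?_⟩
          rw [hγ'def]
          simp only [if_neg heI]
          exact hc
        · refine ⟨Or.inr he, ?_⟩
          rw [hγ'def]
          simp only [if_pos he]
          exact hc
    have hdisjf : ∀ c : ℕ, Disjoint (colored.filter (fun e => γ e = c))
        (I.filter (fun e => δ e = c)) :=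
      fun c => hdisjCI.mono (Finset.filter_subset _ _) (Finset.filter_subset _ _)
    have hIx1 : ∀ x ∈ tl, ∀ c : ℕ, edeg (I.filter (fun e => δ e = c)) x ≤ 1 := by
      intro x hxtl c
      unfold edeg
      have hxw : x ≠ w := fun h => hwtl (h ▸ hxtl)
      have hss : ((I.filter (fun e => δ e = c)).filter (fun e => x ∈ e)) ⊆ {s(w, x)} := by
        intro f hf
        rw [Finset.mem_filter, Finset.mem_filter] at hf
        have hfE := (hImem f hf.1.1).1
        have hwf := (hImem f hf.1.1).2.1
        rw [Finset.mem_singleton]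
        exact eq_pair_of_mem (hnd f hfE) hwf hf.2 hxw.symm
      exact le_trans (Finset.card_le_card hss) (by simp)
    have hJ1' : ∀ x ∈ tl, ∀ c : ℕ, edeg (colored'.filter (fun e => γ' e = c)) x ≤ 1 := by
      intro x hxtl c
      rw [hfiltereq c, edeg_union (hdisjf c)]
      by_cases h20 : edeg (I.filter (fun e => δ e = c)) x = 0
      · rw [h20, Nat.add_zero]
        exact hJ1 x (List.mem_cons_of_mem w hxtl) c
      · have h21 : 1 ≤ edeg (I.filter (fun e => δ e = c)) x := by omega
        obtain ⟨f₀, hf₀⟩ := Finset.card_pos.1 h21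
        rw [Finset.mem_filter, Finset.mem_filter] at hf₀
        have hf₀I : f₀ ∈ I := hf₀.1.1
        have hδf₀ := hδr f₀ hf₀I
        have hfirst : edeg (colored.filter (fun e => γ e = c)) x = 0 := by
          by_contra h
          have h1 : 1 ≤ edeg (colored.filter (fun e => γ e = c)) x := by omega
          refine hδf₀.2 ?_
          rw [hforbdef]
          rw [← hf₀.1.2] at h1
          exact Finset.mem_filter.2 ⟨hδf₀.1, ⟨x, hf₀.2, h1⟩⟩
        rw [hfirst, Nat.zero_add]
        exact hIx1 x hxtl c
    have hIw : ∀ c : ℕ, edeg (I.filter (fun e => δ e = c)) w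
        = (I.filter (fun e => δ e = c)).card := by
      intro c
      unfold edeg
      rw [Finset.filter_true_of_mem]
      intro e he
      exact (hImem e (Finset.filter_subset _ _ he)).2.1
    have hval' : ∀ v : V, v ∈ (pre ++ [w]).toFinset → ∀ c : ℕ,
        edeg (colored'.filter (fun e => γ' e = c)) v = 0 ∨
        edeg (colored'.filter (fun e => γ' e = c)) v % k = 1 := by
      intro v hv c
      rw [List.toFinset_append, Finset.mem_union] at hv
      rw [hfiltereq c, edeg_union (hdisjf c)]
      rcases hv with hv | hv
      · -- old vertex: no new incident edges
        rw [List.mem_toFinset] at hv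
        have hzero : edeg (I.filter (fun e => δ e = c)) v = 0 := by
          unfold edeg
          rw [Finset.card_eq_zero, Finset.filter_eq_empty_iff]
          intro f hf hvf
          have hfI : f ∈ I := Finset.filter_subset _ _ hf
          exact (hImem f hfI).2.2
            ((hcol f (hImem f hfI).1).2 ⟨v, hvf, List.mem_toFinset.2 hv⟩)
        rw [hzero, Nat.add_zero]
        exact hval v (List.mem_toFinset.2 hv) c
      · -- v = w
        simp only [List.toFinset_cons, List.toFinset_nil, LawfulSingleton.insert_empty_eq,
          Finset.mem_singleton] at hv
        subst hv
        rw [hIw c]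
        by_cases hcnt : (I.filter (fun e => δ e = c)).card = 0
        · rw [hcnt, Nat.add_zero]
          have := hJ1 v (List.mem_cons_self) c
          interval_cases h : edeg (colored.filter (fun e => γ e = c)) v
          · exact Or.inl rfl
          · right
            simpa using Nat.mod_eq_of_lt (by omega)
        · obtain ⟨f₀, hf₀⟩ := Finset.card_pos.1 (by omega : 0 < (I.filter (fun e => δ e = c)).card)
          rw [Finset.mem_filter] at hf₀
          have hδf₀ := hδr f₀ hf₀.1
          have hfirst : edeg (colored.filter (fun e => γ e = c)) v = 0 := by
            by_contra h
            have h1 : 1 ≤ edeg (colored.filter (fun e => γ e = c)) v := by omega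
            refine hδf₀.2 ?_
            rw [hforbdef]
            rw [← hf₀.2] at h1
            exact Finset.mem_filter.2 ⟨hδf₀.1, ⟨v, (hImem f₀ hf₀.1).2.1, h1⟩⟩
          rw [hfirst, Nat.zero_add]
          have hcr : c ∈ pool ∪ reserve := hf₀.2 ▸ hδf₀.1
          rcases Finset.mem_union.1 hcr with hcp | hcr'
          · rcases hδpool c hcp with h | h
            · exact Or.inr h
            · exact absurd h hcnt
          · have := hδres c hcr'
            right
            have h1 : (I.filter (fun e => δ e = c)).card = 1 := by omega
            rw [h1]
            simpa using Nat.mod_eq_of_lt (by omega)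
    refine ih (pre ++ [w]) (by rw [hlist]; exact hnodup)
      (fun p₁ x s h => hP p₁ x s (by rw [← hlist]; exact h))
      (fun e he u hu => by rw [hlist]; exact hcover e he u hu)
      colored' γ'
      (Finset.union_subset hsub (Finset.filter_subset _ _))
      ?_ ?_ hJ1' hval'
    · -- range
      intro e he
      rcases Finset.mem_union.1 he with h | h
      · have heI : e ∉ I := Finset.disjoint_left.1 hdisjCI h
        rw [hγ'def]
        simp only [if_neg heI]
        exact hrange e h
      · rw [hγ'def]
        simp only [if_pos h]
        exact (hδr e h).1
    · -- covering characterization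
      intro e he
      constructor
      · intro hec
        rcases Finset.mem_union.1 hec with h | h
        · obtain ⟨u, hu, hupre⟩ := (hcol e he).1 h
          refine ⟨u, hu, ?_⟩
          rw [List.toFinset_append]
          exact Finset.mem_union_left _ hupre
        · refine ⟨w, (hImem e h).2.1, ?_⟩
          rw [List.toFinset_append]
          refine Finset.mem_union_right _ ?_
          simp
      · rintro ⟨u, hu, humem⟩
        rw [List.toFinset_append, Finset.mem_union] at humem
        rcases humem with h | h
        · exact Finset.mem_union_left _ ((hcol e he).2 ⟨u, hu, h⟩)
        · simp only [List.toFinset_cons, List.toFinset_nil, LawfulSingleton.insert_empty_eq,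
            Finset.mem_singleton] at h
          subst h
          by_cases hec : e ∈ colored
          · exact Finset.mem_union_left _ hec
          · refine Finset.mem_union_right _ ?_
            rw [hIdef, Finset.mem_filter]
            exact ⟨he, hu, hec⟩

end Grand

section Main

lemma main (k : ℕ) (hk : 2 ≤ k)
    (hAFK : ∀ (W : Type) [Fintype W] [DecidableEq W] (H : SimpleGraph W)
      [DecidableRel H.Adj],
      (k - 1) * Fintype.card W + 1 ≤ H.edgeFinset.card →
      ∃ H' : SimpleGraph W, H' ≤ H ∧ H'.edgeSet.Nonempty ∧
        ∀ v : W, k ∣ Nat.card (H'.neighborSet v))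
    {V : Type} [Fintype V] [DecidableEq V] (G : SimpleGraph V) [DecidableRel G.Adj] :
    ∃ c : Sym2 V → Fin (14 * k - 9), IsChiPrimeKColoring G k c := by
  obtain ⟨H, hHsub, hHvalid, hHmax⟩ := exists_maxH k G
  set E' := G.edgeFinset \ H with hE'def
  have hnd : ∀ e ∈ E', ¬ e.IsDiag := by
    intro e he
    exact G.not_isDiag_of_mem_edgeSet (SimpleGraph.mem_edgeFinset.1 (Finset.mem_sdiff.1 he).1)
  have hdeg : ∀ T : Finset V, T.Nonempty →
      ∃ a ∈ T, edeg (E'.filter (fun e => ∀ u ∈ e, u ∈ T)) a ≤ 3 * (k - 1) :=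
    fun T hT => degbound k G hAFK hk hHsub hHvalid hHmax T hT
  obtain ⟨l, hlfin, hlnd, hlprop⟩ :=
    peel (3 * (k - 1)) E' hdeg Finset.univ.card Finset.univ rfl
  set pool := Finset.Ico 1 (7 * (k - 1) + 1) with hpooldef
  set reserve := Finset.Ico (7 * (k - 1) + 1) (14 * (k - 1) + 1) with hresdef
  have hdisj : Disjoint pool reserve := by
    rw [Finset.disjoint_left]
    intro c hc hc'
    rw [hpooldef, Finset.mem_Ico] at hc
    rw [hresdef, Finset.mem_Ico] at hc'
    omega
  have hpc : pool.card = 7 * (k - 1) := by rw [hpooldef, Nat.card_Ico]; omega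
  have hrc : reserve.card = 7 * (k - 1) := by rw [hresdef, Nat.card_Ico]; omega
  have hpk : 2 * (3 * (k - 1)) + k ≤ 7 * (k - 1) + 1 := by omega
  have hgrand := grand k (3 * (k - 1)) (7 * (k - 1)) hk hpk pool reserve hdisj hpc hrc E' hnd
    l [] (by simpa using hlnd)
    (fun p₁ x s h => hlprop p₁ x s (by simpa using h))
    (by
      intro e he u hu
      simp only [List.nil_append]
      rw [hlfin]
      exact Finset.mem_univ u)
    ∅ (fun _ => 0) (Finset.empty_subset _)
    (fun e he => absurd he (Finset.notMem_empty e))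
    (by
      intro e he
      constructor
      · intro h
        exact absurd h (Finset.notMem_empty e)
      · rintro ⟨u, _, hu⟩
        simp at hu)
    (by
      intro x _ c
      unfold edeg
      simp)
    (by
      intro v hv
      simp at hv)
  obtain ⟨γT, hγTr, hγTval⟩ := hgrand
  have hm9 : 0 < 14 * k - 9 := by omega
  have hbound : ∀ e, e ∈ E' → γT e < 14 * k - 9 := by
    intro e he
    rcases Finset.mem_union.1 (hγTr e he) with h | h
    · rw [hpooldef, Finset.mem_Ico] at h; omega
    · rw [hresdef, Finset.mem_Ico] at h; omega
  have hpos : ∀ e, e ∈ E' → 1 ≤ γT e := by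
    intro e he
    rcases Finset.mem_union.1 (hγTr e he) with h | h
    · rw [hpooldef, Finset.mem_Ico] at h; omega
    · rw [hresdef, Finset.mem_Ico] at h; omega
  refine ⟨fun e => if he : e ∈ E' then ⟨γT e, hbound e he⟩ else ⟨0, hm9⟩, ?_⟩
  intro i v
  unfold colorDeg
  by_cases hi : (i : ℕ) = 0
  · have hset : (G.incidenceFinset v).filter
        (fun e => (if he : e ∈ E' then (⟨γT e, hbound e he⟩ : Fin (14 * k - 9))
          else ⟨0, hm9⟩) = i) = H.filter (fun e => v ∈ e) := by
      rw [SimpleGraph.incidenceFinset_eq_filter]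
      ext e
      simp only [Finset.mem_filter, Finset.mem_filter]
      constructor
      · rintro ⟨⟨heE, hve⟩, hci⟩
        refine ⟨?_, hve⟩
        by_contra heH
        have heE' : e ∈ E' := Finset.mem_sdiff.2 ⟨heE, heH⟩
        rw [dif_pos heE'] at hci
        have := congrArg Fin.val hci
        simp only at this
        have := hpos e heE'
        omega
      · rintro ⟨heH, hve⟩
        have heE : e ∈ G.edgeFinset := hHsub heH
        have heE' : e ∉ E' := by
          rw [hE'def, Finset.mem_sdiff]
          intro h
          exact h.2 heH
        refine ⟨⟨heE, hve⟩, ?_⟩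
        rw [dif_neg heE']
        exact Fin.ext (by simpa using hi.symm)
    rw [hset]
    exact hHvalid v
  · have hset : (G.incidenceFinset v).filter
        (fun e => (if he : e ∈ E' then (⟨γT e, hbound e he⟩ : Fin (14 * k - 9))
          else ⟨0, hm9⟩) = i) = (E'.filter (fun e => γT e = (i : ℕ))).filter
            (fun e => v ∈ e) := by
      rw [SimpleGraph.incidenceFinset_eq_filter]
      ext e
      simp only [Finset.mem_filter]
      constructor
      · rintro ⟨⟨heE, hve⟩, hci⟩
        by_cases heE' : e ∈ E'
        · refine ⟨⟨heE', ?_⟩, hve⟩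
          rw [dif_pos heE'] at hci
          have := congrArg Fin.val hci
          simpa using this
        · exfalso
          rw [dif_neg heE'] at hci
          have := congrArg Fin.val hci
          simp only at this
          exact hi this.symm
      · rintro ⟨⟨heE', hgt⟩, hve⟩
        have heE : e ∈ G.edgeFinset := (Finset.mem_sdiff.1 heE').1
        refine ⟨⟨heE, hve⟩, ?_⟩
        rw [dif_pos heE']
        exact Fin.ext (by simpa using hgt)
    rw [hset]
    exact hγTval v (i : ℕ)

end Main

end ChiAux

theorem chi_prime_k_of_AFK (k : ℕ) (hk : 2 ≤ k)
    (hAFK : ∀ (W : Type) [Fintype W] [DecidableEq W] (H : SimpleGraph W)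
      [DecidableRel H.Adj],
      (k - 1) * Fintype.card W + 1 ≤ H.edgeFinset.card →
      ∃ H' : SimpleGraph W, H' ≤ H ∧ H'.edgeSet.Nonempty ∧
        ∀ v : W, k ∣ Nat.card (H'.neighborSet v))
    {V : Type} [Fintype V] [DecidableEq V] (G : SimpleGraph V) [DecidableRel G.Adj] :
    ∃ c : Sym2 V → Fin (14 * k - 9), IsChiPrimeKColoring G k c := by
  exact ChiAux.main k hk hAFK G
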